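/- Let w₁ > w₂ be real and set χ = w₁ − w₂. Define u: ℝ → ℝ by u(t) = w₁·t + √(χ² + 4e^t) − χ·log((χ + √(χ² + 4e^t))/2). Then u is differentiable and u'(t) = (w₁ + w₂ + √(χ² + 4e^t))/2 for every t ∈ ℝ. -/

import Mathlib

/-- The derivative of the B-model canonical coordinate `ǔ¹` of the mirror of ℙ¹ with
respect to `t = t¹` is `(w₁ + w₂ + Δ(q))/2`, matching the differential of Givental's
A-model canonical coordinate. -/
theorem deriv_canonical_coordinate (w₁ w₂ : ℝ) (h : w₂ < w₁) (χ : ℝ)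
    (hχ : χ = w₁ - w₂) (u : ℝ → ℝ)
    (hu : u = fun t => w₁ * t + Real.sqrt (χ ^ 2 + 4 * Real.exp t) -
      χ * Real.log ((χ + Real.sqrt (χ ^ 2 + 4 * Real.exp t)) / 2)) :
    ∀ t : ℝ, HasDerivAt u ((w₁ + w₂ + Real.sqrt (χ ^ 2 + 4 * Real.exp t)) / 2) t := by
  intro t
  have hχpos : 0 < χ := by rw [hχ]; linarith
  have hin : (0:ℝ) < χ ^ 2 + 4 * Real.exp t := by positivity
  set Δ := Real.sqrt (χ ^ 2 + 4 * Real.exp t) with hΔdef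
  have hΔpos : 0 < Δ := Real.sqrt_pos.mpr hin
  have hΔsq : Δ ^ 2 = χ ^ 2 + 4 * Real.exp t := Real.sq_sqrt hin.le
  have h1 : HasDerivAt (fun t => χ ^ 2 + 4 * Real.exp t) (4 * Real.exp t) t := by
    simpa using ((Real.hasDerivAt_exp t).const_mul 4).const_add (χ ^ 2)
  have h2 : HasDerivAt (fun t => Real.sqrt (χ ^ 2 + 4 * Real.exp t))
      (4 * Real.exp t / (2 * Δ)) t := h1.sqrt hin.ne'
  have h3 : HasDerivAt (fun t => (χ + Real.sqrt (χ ^ 2 + 4 * Real.exp t)) / 2)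
      ((4 * Real.exp t / (2 * Δ)) / 2) t := (h2.const_add χ).div_const 2
  have h4 : HasDerivAt (fun t => Real.log ((χ + Real.sqrt (χ ^ 2 + 4 * Real.exp t)) / 2))
      ((4 * Real.exp t / (2 * Δ)) / 2 / ((χ + Δ) / 2)) t := by
    refine h3.log ?_
    positivity
  have h5 : HasDerivAt u
      (w₁ + 4 * Real.exp t / (2 * Δ) -
        χ * ((4 * Real.exp t / (2 * Δ)) / 2 / ((χ + Δ) / 2))) t := by
    rw [hu]
    exact (((hasDerivAt_id t).const_mul w₁ |>.add h2).sub (h4.const_mul χ)).congr_deriv (by ring)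
  convert h5 using 1
  have hχΔ : 0 < χ + Δ := by linarith
  have he : 4 * Real.exp t = Δ ^ 2 - χ ^ 2 := by linarith [hΔsq]
  rw [he]
  field_simp
  rw [hχ]; ring
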